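/- Let (T, (V_t)_{t∈T}) be a k-atomic tree-decomposition of a finite graph G, and let t1t2 be an edge of T. Let T_1, T_2 be the two components of T − t1t2 with t1 ∈ T_1, let G_1 := ⋃_{t∈T_1} V_t, and let X := V_{t1} ∩ V_{t2}. Then there is a connected component C of the subgraph of G induced on G_1 \ X such that every vertex x ∈ X has a neighbor in C. -/

import Mathlib

open SimpleGraph

/-- `x` and `y` lie in the same component of `G - S`:
there is a walk from `x` to `y` in `G` avoiding `S`. -/
def ConnAvoiding {V : Type} (G : SimpleGraph V) (S : Set V) (x y : V) : Prop :=
  ∃ p : G.Walk x y, ∀ v ∈ p.support, v ∉ S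

/-- `X` is a `(<k)`-inseparable set of vertices of `G`: it has at least `k` vertices and
no two of its vertices can be separated by deleting fewer than `k` vertices. -/
def IsInseparable {V : Type} (G : SimpleGraph V) (k : ℕ) (X : Set V) : Prop :=
  k ≤ X.ncard ∧
  ∀ x ∈ X, ∀ y ∈ X, x ≠ y → ∀ S : Set V, S.ncard < k → x ∉ S → y ∉ S →
    ConnAvoiding G S x y

/-- `X` is a `k`-block of `G`: a maximal `(<k)`-inseparable set of vertices. -/
def IsBlock {V : Type} (G : SimpleGraph V) (k : ℕ) (X : Set V) : Prop :=
  IsInseparable G k X ∧ ∀ Y : Set V, IsInseparable G k Y → X ⊆ Y → Y = X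

/-- The block number `β(G)`: the maximum `k` for which `G` contains a `k`-block. -/
noncomputable def blockNumber {V : Type} (G : SimpleGraph V) : ℕ :=
  sSup {k : ℕ | ∃ X : Set V, IsBlock G k X}

/-- There is a `k`-fan from `v` to `U` in `G`: `k` paths starting at `v`, otherwise
disjoint, each ending in `U` (trivial paths allowed). -/
def IsFanTo {V : Type} (G : SimpleGraph V) (k : ℕ) (v : V) (U : Set V) : Prop :=
  ∃ (e : Fin k → V) (P : ∀ i : Fin k, G.Path v (e i)),
    (∀ i, e i ∈ U) ∧
    ∀ i j : Fin k, i ≠ j →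
      ∀ w, w ∈ (P i).val.support → w ∈ (P j).val.support → w = v

/-- `X` is a `k`-fan-set: from every `x ∈ X` there is a `k`-fan to `X`. -/
def IsFanSet {V : Type} (G : SimpleGraph V) (k : ℕ) (X : Set V) : Prop :=
  ∀ x ∈ X, IsFanTo G k x X

/-- The `∞`-admissibility of `G`: the maximum `k` for which `G` contains a nonempty
`k`-fan-set. -/
noncomputable def admInf {V : Type} (G : SimpleGraph V) : ℕ :=
  sSup {k : ℕ | ∃ X : Set V, X.Nonempty ∧ IsFanSet G k X}

/-- `C` is (the vertex set of) a connected component of the subgraph of `G` induced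
on `A`: a maximal subset of `A` inducing a connected subgraph. -/
def IsCompOf {V : Type} (G : SimpleGraph V) (A C : Set V) : Prop :=
  C ⊆ A ∧ (G.induce C).Connected ∧
  ∀ D : Set V, C ⊆ D → D ⊆ A → (G.induce D).Connected → D = C

/-- `H` is a minor of `G`, via disjoint nonempty connected branch sets. -/
def IsMinor {W V : Type} (H : SimpleGraph W) (G : SimpleGraph V) : Prop :=
  ∃ B : W → Set V,
    (∀ h, (B h).Nonempty) ∧
    (∀ h, (G.induce (B h)).Connected) ∧
    (∀ h h', h ≠ h' → Disjoint (B h) (B h')) ∧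
    ∀ h h', H.Adj h h' → ∃ u ∈ B h, ∃ v ∈ B h', G.Adj u v

/-- `H` is a topological minor of `G`: there are branch vertices `φ u` and, for every
edge `uv` of `H`, a path in `G` from `φ u` to `φ v`; distinct edge-paths meet only in
branch vertices (hence only in common endpoints), and internal vertices of the paths
are not branch vertices. -/
def IsTopMinor {W V : Type} (H : SimpleGraph W) (G : SimpleGraph V) : Prop :=
  ∃ (φ : W ↪ V) (P : ∀ u v : W, H.Adj u v → G.Path (φ u) (φ v)),
    (∀ u v (h : H.Adj u v) w, w ∈ (P u v h).val.support →
        w ∈ Set.range φ → w = φ u ∨ w = φ v) ∧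
    (∀ u v (h : H.Adj u v) u' v' (h' : H.Adj u' v'), s(u, v) ≠ s(u', v') →
        ∀ w, w ∈ (P u v h).val.support → w ∈ (P u' v' h').val.support →
          w ∈ Set.range φ)

/-- A tree-decomposition of `G` with tree on node type `T`. -/
structure TreeDecomp {V : Type} (G : SimpleGraph V) (T : Type) where
  tree : SimpleGraph T
  isTree : tree.IsTree
  part : T → Set V
  part_covers : ∀ v : V, ∃ t, v ∈ part t
  part_edge : ∀ ⦃u v : V⦄, G.Adj u v → ∃ t, u ∈ part t ∧ v ∈ part t
  part_path : ∀ (t₁ t₂ t₃ : T) (p : tree.Path t₁ t₃), t₂ ∈ p.val.support →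
    part t₁ ∩ part t₃ ⊆ part t₂

/-- `m` pairwise vertex-disjoint `A`–`B` paths in `G`. -/
def DisjPaths {V : Type} (G : SimpleGraph V) (m : ℕ) (A B : Set V) : Prop :=
  ∃ (a b : Fin m → V) (P : ∀ i : Fin m, G.Path (a i) (b i)),
    (∀ i, a i ∈ A) ∧ (∀ i, b i ∈ B) ∧
    ∀ i j : Fin m, i ≠ j → ∀ w, w ∈ (P i).val.support → w ∉ (P j).val.support

/-- `a` is lexicographically smaller than `b` as `(n+1)`-tuples `(a 0, …, a n)`. -/
def FatLexLT (n : ℕ) (a b : ℕ → ℕ) : Prop :=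
  ∃ i ≤ n, (∀ j < i, a j = b j) ∧ a i < b i

namespace TreeDecomp

variable {V T : Type} {G : SimpleGraph V}

/-- The tree-decomposition has adhesion less than `k`. -/
def AdhesionLT (D : TreeDecomp G T) (k : ℕ) : Prop :=
  ∀ ⦃s t : T⦄, D.tree.Adj s t → (D.part s ∩ D.part t).ncard < k

/-- The torso of the part at node `t`: the induced subgraph on `part t`, with edges
added between any two vertices lying in a common adhesion-set at `t`. -/
def torso (D : TreeDecomp G T) (t : T) : SimpleGraph V where
  Adj u v := u ≠ v ∧ u ∈ D.part t ∧ v ∈ D.part t ∧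
    (G.Adj u v ∨ ∃ s : T, D.tree.Adj s t ∧ u ∈ D.part s ∧ v ∈ D.part s)
  symm := by
    refine ⟨?_⟩
    rintro u v ⟨h1, h2, h3, h4⟩
    refine ⟨h1.symm, h3, h2, ?_⟩
    rcases h4 with h | ⟨s, hs, hu, hv⟩
    · exact Or.inl h.symm
    · exact Or.inr ⟨s, hs, hv, hu⟩
  loopless := ⟨fun u h => h.1 rfl⟩

/-- Degree of `x` in the torso at `t`. -/
noncomputable def torsoDeg (D : TreeDecomp G T) (t : T) (x : V) : ℕ :=
  ((D.torso t).neighborSet x).ncard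

/-- The width of a tree-decomposition: `max (|V_t| - 1)`. -/
noncomputable def width [Fintype T] (D : TreeDecomp G T) : ℕ :=
  Finset.univ.sup fun t : T => (D.part t).ncard - 1

/-- Entry `i` of the fatness tuple: the number of parts of size `n - i`,
where `n = |V(G)|`. -/
noncomputable def fatness [Fintype V] (D : TreeDecomp G T) (i : ℕ) : ℕ :=
  {t : T | (D.part t).ncard = Fintype.card V - i}.ncard

/-- The tree-decomposition is `k`-atomic: it has adhesion `< k` and its fatness is
lexicographically minimum among all tree-decompositions of `G` of adhesion `< k`. -/
def IsAtomic [Fintype V] (D : TreeDecomp G T) (k : ℕ) : Prop :=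
  D.AdhesionLT k ∧
  ∀ (T' : Type) (_ : Fintype T') (D' : TreeDecomp G T'), D'.AdhesionLT k →
    ¬ FatLexLT (Fintype.card V) D'.fatness D.fatness

/-- The tree-decomposition is `k`-lean. -/
def IsLean (D : TreeDecomp G T) (k : ℕ) : Prop :=
  D.AdhesionLT k ∧
  ∀ (s t : T) (A B : Set V), A ⊆ D.part s → B ⊆ D.part t →
    A.ncard = B.ncard → A.ncard ≤ k →
    DisjPaths G A.ncard A B ∨
    ∃ u w : T, D.tree.Adj u w ∧
      (∀ p : D.tree.Path s t, s(u, w) ∈ p.val.edges) ∧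
      (D.part u ∩ D.part w).ncard < A.ncard

end TreeDecomp



namespace St7
variable {V : Type} {G : SimpleGraph V}

/-- There is a walk from `u` to `v` in `G` with all vertices in `A`. -/
def WalkIn (G : SimpleGraph V) (A : Set V) (u v : V) : Prop :=
  ∃ w : G.Walk u v, ∀ x ∈ w.support, x ∈ A

lemma WalkIn.refl {A : Set V} {u : V} (hu : u ∈ A) : WalkIn G A u u :=
  ⟨Walk.nil, by simp [hu]⟩

lemma WalkIn.symm {A : Set V} {u v : V} (h : WalkIn G A u v) : WalkIn G A v u := by
  obtain ⟨w, hw⟩ := h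
  exact ⟨w.reverse, by simpa [Walk.support_reverse] using hw⟩

lemma WalkIn.trans {A : Set V} {u v x : V} (h : WalkIn G A u v) (h' : WalkIn G A v x) :
    WalkIn G A u x := by
  obtain ⟨w, hw⟩ := h; obtain ⟨w', hw'⟩ := h'
  refine ⟨w.append w', fun y hy => ?_⟩
  rcases (Walk.mem_support_append_iff _ _).1 hy with h | h
  · exact hw y h
  · exact hw' y h

lemma WalkIn.mem_left {A : Set V} {u v : V} (h : WalkIn G A u v) : u ∈ A := by
  obtain ⟨w, hw⟩ := h; exact hw u w.start_mem_support

lemma WalkIn.mem_right {A : Set V} {u v : V} (h : WalkIn G A u v) : v ∈ A := by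
  obtain ⟨w, hw⟩ := h; exact hw v w.end_mem_support

lemma WalkIn.of_adj {A : Set V} {u v : V} (hu : u ∈ A) (hv : v ∈ A) (h : G.Adj u v) :
    WalkIn G A u v :=
  ⟨Walk.cons h Walk.nil, by intro x hx; simp at hx; rcases hx with rfl | rfl <;> assumption⟩

lemma walkIn_of_walk {A : Set V} {u v x : V} (w : G.Walk u v) (hw : ∀ y ∈ w.support, y ∈ A)
    (hx : x ∈ w.support) : WalkIn G A u x := by
  classical
  exact ⟨w.takeUntil x hx, fun y hy => hw y (w.support_takeUntil_subset hx hy)⟩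

/-- The component of `v` in `G` restricted to `A`. -/
def comp (G : SimpleGraph V) (A : Set V) (v : V) : Set V := {w | WalkIn G A v w}

/-- The set of components of `G` restricted to `A`. -/
def compSet (G : SimpleGraph V) (A : Set V) : Set (Set V) :=
  {C | ∃ v ∈ A, C = comp G A v}

lemma comp_subset {A : Set V} {v : V} : comp G A v ⊆ A := fun _ h => h.mem_right

lemma mem_comp_self {A : Set V} {v : V} (hv : v ∈ A) : v ∈ comp G A v := WalkIn.refl hv

lemma reachable_induce_of_walkIn {C : Set V} {u v : V} (h : WalkIn G C u v) :
    ∀ (hu : u ∈ C) (hv : v ∈ C), (G.induce C).Reachable ⟨u, hu⟩ ⟨v, hv⟩ := by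
  obtain ⟨w, hw⟩ := h
  induction w with
  | nil => intro hu hv; rfl
  | @cons a b c hab w ih =>
    intro hu hv
    have hb : b ∈ C := hw b (by simp)
    refine Reachable.trans ?_ (ih (fun y hy => hw y (by simp [hy])) hb hv)
    exact Adj.reachable (by simp [hab, comap_adj])

lemma walkIn_of_induce_walk {C : Set V} {a b : C} (w : (G.induce C).Walk a b) :
    WalkIn G C a.val b.val := by
  induction w with
  | nil => exact WalkIn.refl (Subtype.coe_prop _)
  | @cons a b c hab w ih =>
    have : G.Adj a.val b.val := by simpa [comap_adj] using hab
    exact (WalkIn.of_adj a.2 b.2 this).trans ih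


lemma mem_comp_of_adj {A : Set V} {v u x : V} (hu : u ∈ comp G A v) (hx : x ∈ A)
    (hadj : G.Adj u x) : x ∈ comp G A v :=
  WalkIn.trans hu (WalkIn.of_adj hu.mem_right hx hadj)

lemma comp_support_closed {A : Set V} {v u : V} (hu : u ∈ comp G A v) :
    ∀ x, WalkIn G A u x → x ∈ comp G A v := fun _ h => WalkIn.trans hu h

lemma comp_isCompOf {A : Set V} {v : V} (hv : v ∈ A) : IsCompOf G A (comp G A v) := by
  have key : ∀ c : (comp G A v : Set V), (G.induce (comp G A v)).Reachable ⟨v, mem_comp_self hv⟩ c := by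
    rintro ⟨c, hc⟩
    obtain ⟨w, hw⟩ := hc
    have hsupp : ∀ y ∈ w.support, y ∈ comp G A v := fun y hy => walkIn_of_walk w hw hy
    exact reachable_induce_of_walkIn (C := comp G A v) ⟨w, hsupp⟩ (mem_comp_self hv)
      (comp_support_closed (mem_comp_self hv) c ⟨w, hw⟩)
  haveI : Nonempty (comp G A v : Set V) := ⟨⟨v, mem_comp_self hv⟩⟩
  refine ⟨comp_subset, Connected.mk (fun a b => (key a).symm.trans (key b)), ?_⟩
  · rintro D hCD hDA hconn
    refine Set.Subset.antisymm ?_ hCD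
    intro d hd
    have hvD : v ∈ D := hCD (mem_comp_self hv)
    have := hconn.preconnected ⟨v, hvD⟩ ⟨d, hd⟩
    obtain ⟨w⟩ := this
    have : WalkIn G D v d := walkIn_of_induce_walk w
    obtain ⟨w', hw'⟩ := this
    exact ⟨w', fun y hy => hDA (hw' y hy)⟩

lemma comp_eq_of_mem {A : Set V} {v w u : V} (hu₁ : u ∈ comp G A v) (hu₂ : u ∈ comp G A w) :
    comp G A v = comp G A w := by
  ext x
  constructor
  · intro hx; exact WalkIn.trans hu₂ (WalkIn.trans hu₁.symm hx)
  · intro hx; exact WalkIn.trans hu₁ (WalkIn.trans hu₂.symm hx)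

lemma compSet_disjoint {A : Set V} {C C' : Set V} (hC : C ∈ compSet G A) (hC' : C' ∈ compSet G A)
    (hne : C ≠ C') : Disjoint C C' := by
  obtain ⟨v, hv, rfl⟩ := hC; obtain ⟨w, hw, rfl⟩ := hC'
  rw [Set.disjoint_left]
  intro u hu hu'
  exact hne (comp_eq_of_mem hu hu')

lemma mem_compSet_self {A : Set V} {v : V} (hv : v ∈ A) : comp G A v ∈ compSet G A :=
  ⟨v, hv, rfl⟩

lemma compSet_subset {A : Set V} {C : Set V} (hC : C ∈ compSet G A) : C ⊆ A := by
  obtain ⟨v, hv, rfl⟩ := hC; exact comp_subset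


section Side
variable {T : Type} {tr : SimpleGraph T}

/-- The set of nodes reachable from `r` by walks avoiding the edge `e`. -/
def SideOf (tr : SimpleGraph T) (e : Sym2 T) (r : T) : Set T :=
  {t | ∃ w : tr.Walk r t, e ∉ w.edges}

lemma mem_sideOf_self (e : Sym2 T) (r : T) : r ∈ SideOf tr e r :=
  ⟨Walk.nil, by simp⟩

lemma sideOf_extend {e : Sym2 T} {r t t' : T} (h : t ∈ SideOf tr e r)
    {w : tr.Walk t t'} (hw : e ∉ w.edges) : t' ∈ SideOf tr e r := by
  obtain ⟨w₀, hw₀⟩ := h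
  exact ⟨w₀.append w, by rw [Walk.edges_append]; simp [hw₀, hw]⟩

lemma sideOf_support {e : Sym2 T} {r t : T} {w : tr.Walk r t} (hw : e ∉ w.edges) :
    ∀ x ∈ w.support, x ∈ SideOf tr e r := by
  classical
  intro x hx
  exact ⟨w.takeUntil x hx, fun hmem => hw (w.edges_takeUntil_subset hx hmem)⟩

lemma sideOf_walk {e : Sym2 T} {r t t' : T} (h : t ∈ SideOf tr e r) (h' : t' ∈ SideOf tr e r) :
    ∃ w : tr.Walk t t', e ∉ w.edges ∧ ∀ x ∈ w.support, x ∈ SideOf tr e r := by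
  obtain ⟨w₁, h₁⟩ := h
  obtain ⟨w₂, h₂⟩ := h'
  refine ⟨w₁.reverse.append w₂, ?_, ?_⟩
  · rw [Walk.edges_append, Walk.edges_reverse]
    simp [h₁, h₂]
  · intro x hx
    rcases (Walk.mem_support_append_iff _ _).1 hx with h | h
    · rw [Walk.support_reverse, List.mem_reverse] at h
      exact sideOf_support h₁ x h
    · exact sideOf_support h₂ x h

variable (htr : tr.IsTree) {t₁ t₂ : T} (h12 : tr.Adj t₁ t₂)
include htr h12

lemma sideOf_not_both {u : T} (h₁ : u ∈ SideOf tr s(t₁,t₂) t₁) (h₂ : u ∈ SideOf tr s(t₁,t₂) t₂) :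
    False := by
  classical
  obtain ⟨w₁, hw₁⟩ := h₁
  obtain ⟨w₂, hw₂⟩ := h₂
  -- a walk from t₁ to t₂ avoiding the edge s(t₁,t₂)
  set w : tr.Walk t₁ t₂ := w₁.append w₂.reverse with hw
  have hwe : s(t₁,t₂) ∉ w.edges := by
    rw [hw, Walk.edges_append, Walk.edges_reverse]
    simp [hw₁, hw₂]
  have hbe : s(t₁,t₂) ∉ w.bypass.edges := fun h => hwe (w.edges_bypass_subset h)
  -- the single-edge path
  have hp₀ : (Walk.cons h12 Walk.nil : tr.Walk t₁ t₂).IsPath := by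
    rw [Walk.cons_isPath_iff]
    exact ⟨Walk.IsPath.nil, by simp [h12.ne]⟩
  have := htr.IsAcyclic.path_unique ⟨w.bypass, w.bypass_isPath⟩ ⟨Walk.cons h12 Walk.nil, hp₀⟩
  have hval : w.bypass = (Walk.cons h12 Walk.nil : tr.Walk t₁ t₂) := congrArg Subtype.val this
  rw [hval] at hbe
  simp at hbe

lemma sideOf_cover (u : T) : u ∈ SideOf tr s(t₁,t₂) t₁ ∨ u ∈ SideOf tr s(t₁,t₂) t₂ := by
  classical
  obtain ⟨w₀⟩ := htr.isConnected.preconnected t₁ u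
  set p := w₀.bypass with hp
  have hpp : p.IsPath := w₀.bypass_isPath
  by_cases he : s(t₁,t₂) ∈ p.edges
  · right
    have ht₂ : t₂ ∈ p.support := p.snd_mem_support_of_mem_edges he
    refine ⟨p.dropUntil t₂ ht₂, fun hmem => ?_⟩
    -- else t₁ would appear twice in p
    have ht₁d : t₁ ∈ (p.dropUntil t₂ ht₂).support :=
      (p.dropUntil t₂ ht₂).fst_mem_support_of_mem_edges hmem
    have ht₁tail : t₁ ∈ (p.dropUntil t₂ ht₂).support.tail := by
      have := (p.dropUntil t₂ ht₂).support_eq_cons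
      rw [this, List.mem_cons] at ht₁d
      rcases ht₁d with h | h
      · exact absurd h h12.ne
      · exact h
    have hnodup := hpp.support_nodup
    rw [← p.take_spec ht₂, Walk.support_append, List.nodup_append] at hnodup
    exact hnodup.2.2 _ (p.takeUntil t₂ ht₂).start_mem_support _ ht₁tail rfl
  · left
    exact ⟨p, he⟩

end Side


section Main
variable {V T : Type} {G : SimpleGraph V}
variable (D : TreeDecomp G T) (t₁ t₂ : T)

/-- nodes on the `t₁` side. -/
abbrev S1 : Set T := SideOf D.tree s(t₁,t₂) t₁
/-- nodes on the `t₂` side. -/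
abbrev S2 : Set T := SideOf D.tree s(t₁,t₂) t₂
/-- the adhesion set. -/
abbrev Xset : Set V := D.part t₁ ∩ D.part t₂
/-- G₁ minus X. -/
abbrev bigA : Set V := (⋃ t ∈ S1 D t₁ t₂, D.part t) \ Xset D t₁ t₂
/-- the neighbourhood of `C` inside `X`. -/
abbrev XC (C : Set V) : Set V := {x ∈ Xset D t₁ t₂ | ∃ y ∈ C, G.Adj x y}

/-- node type of the modified tree-decomposition. -/
abbrev NT : Type :=
  {t : T // t ∈ S2 D t₁ t₂} ⊕
    ({t : T // t ∈ S1 D t₁ t₂} × {C : Set V // C ∈ compSet G (bigA D t₁ t₂)})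

/-- the modified tree. -/
def bigTree : SimpleGraph (NT D t₁ t₂) where
  Adj x y :=
    match x, y with
    | .inl s, .inl s' => D.tree.Adj s.val s'.val
    | .inl s, .inr p => s.val = t₂ ∧ p.1.val = t₁
    | .inr p, .inl s => s.val = t₂ ∧ p.1.val = t₁
    | .inr p, .inr q => p.2 = q.2 ∧ D.tree.Adj p.1.val q.1.val
  symm := by
    refine ⟨?_⟩
    rintro (s|p) (s'|q) h
    · exact h.symm
    · exact h
    · exact h
    · exact ⟨h.1.symm, h.2.symm⟩
  loopless := by
    refine ⟨?_⟩
    rintro (s|p) h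
    · exact D.tree.loopless.irrefl _ h
    · exact D.tree.loopless.irrefl _ h.2

/-- the modified parts. -/
def bigPart : NT D t₁ t₂ → Set V
  | .inl s => D.part s.val
  | .inr p => D.part p.1.val ∩ (p.2.val ∪ XC D t₁ t₂ p.2.val)

variable {D t₁ t₂}

@[simp] lemma bigPart_inl (s : {t : T // t ∈ S2 D t₁ t₂}) :
    bigPart D t₁ t₂ (.inl s) = D.part s.val := rfl

@[simp] lemma bigPart_inr (p) :
    bigPart D t₁ t₂ (.inr p) = D.part p.1.val ∩ (p.2.val ∪ XC D t₁ t₂ p.2.val) := rfl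

@[simp] lemma bigTree_adj_inl_inl {s s'} :
    (bigTree D t₁ t₂).Adj (.inl s) (.inl s') ↔ D.tree.Adj s.val s'.val := Iff.rfl

@[simp] lemma bigTree_adj_inl_inr {s p} :
    (bigTree D t₁ t₂).Adj (.inl s) (.inr p) ↔ s.val = t₂ ∧ p.1.val = t₁ := Iff.rfl

@[simp] lemma bigTree_adj_inr_inl {s p} :
    (bigTree D t₁ t₂).Adj (.inr p) (.inl s) ↔ s.val = t₂ ∧ p.1.val = t₁ := Iff.rfl

@[simp] lemma bigTree_adj_inr_inr {p q} :
    (bigTree D t₁ t₂).Adj (.inr p) (.inr q) ↔ p.2 = q.2 ∧ D.tree.Adj p.1.val q.1.val := Iff.rfl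

end Main


section Main2
variable {V T : Type} {G : SimpleGraph V} {D : TreeDecomp G T} {t₁ t₂ : T}

lemma parts_on_path {a b x : T} {w : D.tree.Walk a b} (hw : w.IsPath) (hx : x ∈ w.support)
    {v : V} (hva : v ∈ D.part a) (hvb : v ∈ D.part b) : v ∈ D.part x :=
  D.part_path a x b ⟨w, hw⟩ hx ⟨hva, hvb⟩

variable (h12 : D.tree.Adj t₁ t₂)
include h12

lemma cross_subset {s t : T} (hs : s ∈ S2 D t₁ t₂) (ht : t ∈ S1 D t₁ t₂) :
    D.part s ∩ D.part t ⊆ Xset D t₁ t₂ := by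
  classical
  rintro v ⟨hvs, hvt⟩
  obtain ⟨w₀⟩ := D.isTree.isConnected.preconnected s t
  set p := w₀.bypass with hp
  by_cases he : s(t₁,t₂) ∈ p.edges
  · have h1 : t₁ ∈ p.support := p.fst_mem_support_of_mem_edges he
    have h2 : t₂ ∈ p.support := p.snd_mem_support_of_mem_edges he
    exact ⟨parts_on_path w₀.bypass_isPath h1 hvs hvt, parts_on_path w₀.bypass_isPath h2 hvs hvt⟩
  · exact absurd (sideOf_extend hs he) (fun h => sideOf_not_both D.isTree h12 ht h)

omit h12 in
lemma mem_bigA_of {v : V} {t : T} (hv : v ∈ D.part t) (ht : t ∈ S1 D t₁ t₂)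
    (hx : v ∉ Xset D t₁ t₂) : v ∈ bigA D t₁ t₂ :=
  ⟨Set.mem_biUnion ht hv, hx⟩

lemma bigA_not_mem_S2 {v : V} (hv : v ∈ bigA D t₁ t₂) {s : T} (hs : s ∈ S2 D t₁ t₂) :
    v ∉ D.part s := by
  intro hvs
  obtain ⟨hvU, hvX⟩ := hv
  obtain ⟨t, ht, hvt⟩ := Set.mem_iUnion₂.1 hvU
  exact hvX (cross_subset h12 hs ht ⟨hvs, hvt⟩)

/-- vertices of G₁ are in X or in bigA -/
lemma mem_S1_part_cases {v : V} {t : T} (hv : v ∈ D.part t) (ht : t ∈ S1 D t₁ t₂) :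
    v ∈ Xset D t₁ t₂ ∨ v ∈ bigA D t₁ t₂ := by
  by_cases hx : v ∈ Xset D t₁ t₂
  · exact Or.inl hx
  · exact Or.inr (mem_bigA_of hv ht hx)

omit h12

/-- lift a walk on the S2 side. -/
lemma lift_S2 {a b : T} (w : D.tree.Walk a b) (ha : a ∈ S2 D t₁ t₂) (hb : b ∈ S2 D t₁ t₂)
    (hS : ∀ x ∈ w.support, x ∈ S2 D t₁ t₂) (P : T → Prop) (hP : ∀ x ∈ w.support, P x) :
    ∃ w' : (bigTree D t₁ t₂).Walk (.inl ⟨a, ha⟩) (.inl ⟨b, hb⟩),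
      ∀ x ∈ w'.support, ∃ s, x = Sum.inl s ∧ P s.val := by
  induction w with
  | nil =>
    exact ⟨Walk.nil, by intro x hx; simp at hx; subst hx; exact ⟨_, rfl, hP _ (by simp)⟩⟩
  | @cons a c b hac w ih =>
    have hc : c ∈ S2 D t₁ t₂ := hS c (by simp)
    obtain ⟨w', hw'⟩ := ih hc hb (fun x hx => hS x (by simp [hx])) (fun x hx => hP x (by simp [hx]))
    refine ⟨Walk.cons (by simpa using hac) w', ?_⟩
    intro x hx
    rw [Walk.support_cons, List.mem_cons] at hx
    rcases hx with rfl | hx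
    · exact ⟨_, rfl, hP a (by simp)⟩
    · exact hw' x hx

/-- lift a walk on the S1 side into the copy `C`. -/
lemma lift_S1 {a b : T} (C : {C : Set V // C ∈ compSet G (bigA D t₁ t₂)})
    (w : D.tree.Walk a b) (ha : a ∈ S1 D t₁ t₂) (hb : b ∈ S1 D t₁ t₂)
    (hS : ∀ x ∈ w.support, x ∈ S1 D t₁ t₂) (P : T → Prop) (hP : ∀ x ∈ w.support, P x) :
    ∃ w' : (bigTree D t₁ t₂).Walk (.inr (⟨a, ha⟩, C)) (.inr (⟨b, hb⟩, C)),
      ∀ x ∈ w'.support, ∃ p, x = Sum.inr p ∧ P p.1.val ∧ p.2 = C := by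
  induction w with
  | nil =>
    exact ⟨Walk.nil, by intro x hx; simp at hx; subst hx; exact ⟨_, rfl, hP _ (by simp), rfl⟩⟩
  | @cons a c b hac w ih =>
    have hc : c ∈ S1 D t₁ t₂ := hS c (by simp)
    obtain ⟨w', hw'⟩ := ih hc hb (fun x hx => hS x (by simp [hx])) (fun x hx => hP x (by simp [hx]))
    refine ⟨Walk.cons (by simp [hac]) w', ?_⟩
    intro x hx
    rw [Walk.support_cons, List.mem_cons] at hx
    rcases hx with rfl | hx
    · exact ⟨_, rfl, hP a (by simp), rfl⟩
    · exact hw' x hx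

/-- a path between two side-members staying in the side. -/
lemma side_path {e : Sym2 T} {r a b : T} (ha : a ∈ SideOf D.tree e r) (hb : b ∈ SideOf D.tree e r) :
    ∃ w : D.tree.Walk a b, w.IsPath ∧ (∀ x ∈ w.support, x ∈ SideOf D.tree e r) := by
  classical
  obtain ⟨w, hwe, hws⟩ := sideOf_walk ha hb
  exact ⟨w.bypass, w.bypass_isPath, fun x hx => hws x (w.support_bypass_subset hx)⟩

end Main2


section Main3
variable {V T : Type} {G : SimpleGraph V} {D : TreeDecomp G T} {t₁ t₂ : T}

lemma invariant_along_walk {α : Type} {H : SimpleGraph α} {f : α → Prop}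
    (hf : ∀ a b, H.Adj a b → (f a ↔ f b)) {x y : α} (w : H.Walk x y) (hx : f x) : f y := by
  induction w with
  | nil => exact hx
  | cons h w ih => exact ih ((hf _ _ h).1 hx)

lemma no_reach_of_invariant {α : Type} {H : SimpleGraph α} {f : α → Prop}
    (hf : ∀ a b, H.Adj a b → (f a ↔ f b)) {x y : α} (hx : f x) (hy : ¬ f y) :
    ¬ H.Reachable x y := fun hr => hr.elim fun w => hy (invariant_along_walk hf w hx)

lemma sideOf_adj_iff {tr : SimpleGraph T} {a b u w : T} (hadj : tr.Adj u w)
    (hne : s(a,b) ≠ s(u,w)) :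
    (u ∈ SideOf tr s(a,b) a ↔ w ∈ SideOf tr s(a,b) a) := by
  constructor
  · intro h
    exact sideOf_extend h (w := Walk.cons hadj Walk.nil) (by simpa using hne)
  · intro h
    exact sideOf_extend h (w := Walk.cons hadj.symm Walk.nil)
      (by simpa [Sym2.eq_swap (a := u)] using hne)

variable (h12 : D.tree.Adj t₁ t₂)
include h12

lemma edge_ne_of_S1 {a b : T} (ha : a ∈ S1 D t₁ t₂) (hb : b ∈ S1 D t₁ t₂) :
    s(t₁,t₂) ≠ s(a,b) := by
  intro h
  rw [Sym2.eq_iff] at h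
  rcases h with ⟨h₁, h₂⟩ | ⟨h₁, h₂⟩
  · subst h₂; exact sideOf_not_both D.isTree h12 hb (mem_sideOf_self _ _)
  · subst h₂; exact sideOf_not_both D.isTree h12 ha (mem_sideOf_self _ _)

lemma bigTree_connected : (bigTree D t₁ t₂).Connected := by
  have ht₂ : t₂ ∈ S2 D t₁ t₂ := mem_sideOf_self _ _
  have ht₁ : t₁ ∈ S1 D t₁ t₂ := mem_sideOf_self _ _
  haveI : Nonempty (NT D t₁ t₂) := ⟨.inl ⟨t₂, ht₂⟩⟩
  have key : ∀ x : NT D t₁ t₂, (bigTree D t₁ t₂).Reachable x (.inl ⟨t₂, ht₂⟩) := by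
    rintro (⟨sv, hs⟩ | ⟨⟨tv, ht⟩, C⟩)
    · obtain ⟨w, _, hsupp⟩ := sideOf_walk hs ht₂
      obtain ⟨w', _⟩ := lift_S2 (t₁ := t₁) w hs ht₂ hsupp (fun _ => True) (fun _ _ => trivial)
      exact ⟨w'⟩
    · obtain ⟨w, _, hsupp⟩ := sideOf_walk ht ht₁
      obtain ⟨w', _⟩ := lift_S1 C w ht ht₁ hsupp (fun _ => True) (fun _ _ => trivial)
      refine Reachable.trans ⟨w'⟩ (Adj.reachable ?_)
      exact ⟨rfl, rfl⟩
  exact Connected.mk fun a b => (key a).trans (key b).symm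

lemma bigTree_isAcyclic : (bigTree D t₁ t₂).IsAcyclic := by
  classical
  rw [isAcyclic_iff_forall_adj_isBridge]
  have hS2ne : ∀ {a b : T}, a ∈ S1 D t₁ t₂ → b ∈ S1 D t₁ t₂ → s(t₁,t₂) ≠ s(a,b) :=
    fun ha hb => edge_ne_of_S1 h12 ha hb
  rintro x y hxy
  rw [isBridge_iff]
  have hdel : ∀ a b : NT D t₁ t₂,
      ((bigTree D t₁ t₂) \ fromEdgeSet {s(x,y)}).Adj a b →
        (bigTree D t₁ t₂).Adj a b ∧ s(a,b) ≠ s(x,y) := by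
    intro a b h
    rw [sdiff_adj, fromEdgeSet_adj] at h
    exact ⟨h.1, fun hh => h.2 ⟨by simp [hh], h.1.ne⟩⟩
  match x, y with
  | .inl s, .inl s' =>
    have hab : D.tree.Adj s.val s'.val := hxy
    set Side := SideOf D.tree s(s.val, s'.val) s.val with hSide
    have f : NT D t₁ t₂ → Prop := Sum.elim (fun u => u.val ∈ Side) (fun _ => t₂ ∈ Side)
    refine no_reach_of_invariant (f := Sum.elim (fun u => u.val ∈ Side) (fun _ => t₂ ∈ Side))
      ?_ (mem_sideOf_self _ _) ?_
    · rintro (u|p) (u'|q) hadj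
      · obtain ⟨hb, hne⟩ := hdel _ _ hadj
        refine sideOf_adj_iff hb ?_
        intro hcontra
        rw [Sym2.eq_iff] at hcontra
        apply hne
        rcases hcontra with ⟨h₁, h₂⟩ | ⟨h₁, h₂⟩
        · rw [Sym2.eq_iff]; left
          exact ⟨by rw [Sum.inl.injEq]; exact Subtype.ext h₁.symm,
                 by rw [Sum.inl.injEq]; exact Subtype.ext h₂.symm⟩
        · rw [Sym2.eq_iff]; right
          exact ⟨by rw [Sum.inl.injEq]; exact Subtype.ext h₂.symm,
                 by rw [Sum.inl.injEq]; exact Subtype.ext h₁.symm⟩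
      · obtain ⟨hb, _⟩ := hdel _ _ hadj
        simp only [Sum.elim_inl, Sum.elim_inr]
        rw [hb.1]
      · obtain ⟨hb, _⟩ := hdel _ _ hadj
        simp only [Sum.elim_inl, Sum.elim_inr]
        rw [hb.1]
      · simp
    · simp only [Sum.elim_inl]
      intro hcontra
      exact sideOf_not_both D.isTree hab hcontra (mem_sideOf_self _ _)
  | .inr p, .inr q =>
    obtain ⟨hCeq, hab⟩ := (bigTree_adj_inr_inr).1 hxy
    set a := p.1.val
    set b := q.1.val
    set Side := SideOf D.tree s(a, b) a with hSide
    have hSne : s(t₁,t₂) ≠ s(a,b) := hS2ne p.1.2 q.1.2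
    have ht₂t₁ : (t₂ ∈ Side ↔ t₁ ∈ Side) := sideOf_adj_iff h12.symm (fun h => hSne.symm (h.trans Sym2.eq_swap))
    refine no_reach_of_invariant
      (f := Sum.elim (fun _ => t₂ ∈ Side)
        (fun r => (r.2 = p.2 ∧ r.1.val ∈ Side) ∨ (r.2 ≠ p.2 ∧ t₂ ∈ Side))) ?_ ?_ ?_
    · rintro (u|r) (u'|r') hadj
      · simp
      · obtain ⟨hb, _⟩ := hdel _ _ hadj
        obtain ⟨hu, hr⟩ := (bigTree_adj_inl_inr).1 hb
        simp only [Sum.elim_inl, Sum.elim_inr]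
        by_cases hC : r'.2 = p.2
        · constructor
          · intro h; exact Or.inl ⟨hC, by rw [hr]; exact ht₂t₁.1 h⟩
          · rintro (⟨_, h⟩ | ⟨hne, h⟩)
            · rw [hr] at h; exact ht₂t₁.2 h
            · exact h
        · constructor
          · intro h; exact Or.inr ⟨hC, h⟩
          · rintro (⟨hC', _⟩ | ⟨_, h⟩)
            · exact absurd hC' hC
            · exact h
      · obtain ⟨hb, _⟩ := hdel _ _ hadj
        obtain ⟨hu, hr⟩ := (bigTree_adj_inr_inl).1 hb
        simp only [Sum.elim_inl, Sum.elim_inr]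
        by_cases hC : r.2 = p.2
        · constructor
          · rintro (⟨_, h⟩ | ⟨hne, h⟩)
            · rw [hr] at h; exact ht₂t₁.2 h
            · exact h
          · intro h; exact Or.inl ⟨hC, by rw [hr]; exact ht₂t₁.1 h⟩
        · constructor
          · rintro (⟨hC', _⟩ | ⟨_, h⟩)
            · exact absurd hC' hC
            · exact h
          · intro h; exact Or.inr ⟨hC, h⟩
      · obtain ⟨hb, hne⟩ := hdel _ _ hadj
        obtain ⟨hC', hadj'⟩ := (bigTree_adj_inr_inr).1 hb
        simp only [Sum.elim_inr]
        by_cases hC : r.2 = p.2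
        · have hC'' : r'.2 = p.2 := hC' ▸ hC
          have hunder : s(a, b) ≠ s(r.1.val, r'.1.val) := by
            intro hcontra
            rw [Sym2.eq_iff] at hcontra
            apply hne
            rcases hcontra with ⟨h₁, h₂⟩ | ⟨h₁, h₂⟩
            · rw [Sym2.eq_iff]; left
              refine ⟨?_, ?_⟩
              · rw [Sum.inr.injEq]
                exact Prod.ext (Subtype.ext h₁.symm) hC
              · rw [Sum.inr.injEq]
                exact Prod.ext (Subtype.ext h₂.symm) (hC''.trans hCeq)
            · rw [Sym2.eq_iff]; right
              refine ⟨?_, ?_⟩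
              · rw [Sum.inr.injEq]
                exact Prod.ext (Subtype.ext h₂.symm) (hC.trans hCeq)
              · rw [Sum.inr.injEq]
                exact Prod.ext (Subtype.ext h₁.symm) hC''
          have := sideOf_adj_iff (a := a) (b := b) hadj' hunder
          constructor
          · rintro (⟨_, h⟩ | ⟨hne', _⟩)
            · exact Or.inl ⟨hC'' , this.1 h⟩
            · exact absurd hC hne'
          · rintro (⟨_, h⟩ | ⟨hne', _⟩)
            · exact Or.inl ⟨hC, this.2 h⟩
            · exact absurd hC'' hne'
        · have hC'' : r'.2 ≠ p.2 := fun h => hC (hC' ▸ h)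
          constructor
          · rintro (⟨hC', _⟩ | ⟨_, h⟩)
            · exact absurd hC' hC
            · exact Or.inr ⟨hC'', h⟩
          · rintro (⟨hC', _⟩ | ⟨_, h⟩)
            · exact absurd hC' hC''
            · exact Or.inr ⟨hC, h⟩
    · exact Or.inl ⟨rfl, mem_sideOf_self _ _⟩
    · simp only [Sum.elim_inr]
      rintro (⟨_, h⟩ | ⟨hne, _⟩)
      · exact sideOf_not_both D.isTree hab h (mem_sideOf_self _ _)
      · exact hne hCeq.symm
  | .inl s, .inr p =>
    obtain ⟨hs, hp⟩ := (bigTree_adj_inl_inr).1 hxy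
    refine fun hr => ?_
    refine no_reach_of_invariant (H := (bigTree D t₁ t₂) \ fromEdgeSet {s(Sum.inl s, Sum.inr p)})
      (f := Sum.elim (fun _ => False) (fun r => r.2 = p.2)) ?_ (by exact rfl) (by simp) hr.symm
    · rintro (u|r) (u'|r') hadj
      · simp
      · obtain ⟨hb, hne⟩ := hdel _ _ hadj
        obtain ⟨hu, hr'⟩ := (bigTree_adj_inl_inr).1 hb
        simp only [Sum.elim_inl, Sum.elim_inr, false_iff]
        intro hC
        apply hne
        have hu' : u = s := Subtype.ext (hu.trans hs.symm)
        have hr'' : r' = p := Prod.ext (Subtype.ext (hr'.trans hp.symm)) hC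
        rw [hu', hr'']
      · obtain ⟨hb, hne⟩ := hdel _ _ hadj
        obtain ⟨hu, hr'⟩ := (bigTree_adj_inr_inl).1 hb
        simp only [Sum.elim_inl, Sum.elim_inr, iff_false]
        intro hC
        apply hne
        have hu' : u' = s := Subtype.ext (hu.trans hs.symm)
        have hr'' : r = p := Prod.ext (Subtype.ext (hr'.trans hp.symm)) hC
        rw [hu', hr'', Sym2.eq_swap]
      · obtain ⟨hb, _⟩ := hdel _ _ hadj
        simp only [Sum.elim_inr]
        rw [((bigTree_adj_inr_inr).1 hb).1]
  | .inr p, .inl s =>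
    obtain ⟨hs, hp⟩ := (bigTree_adj_inr_inl).1 hxy
    refine no_reach_of_invariant (H := (bigTree D t₁ t₂) \ fromEdgeSet {s(Sum.inr p, Sum.inl s)})
      (f := Sum.elim (fun _ => False) (fun r => r.2 = p.2)) ?_ (by exact rfl) (by simp)
    · rintro (u|r) (u'|r') hadj
      · simp
      · obtain ⟨hb, hne⟩ := hdel _ _ hadj
        obtain ⟨hu, hr'⟩ := (bigTree_adj_inl_inr).1 hb
        simp only [Sum.elim_inl, Sum.elim_inr, false_iff]
        intro hC
        apply hne
        have hu' : u = s := Subtype.ext (hu.trans hs.symm)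
        have hr'' : r' = p := Prod.ext (Subtype.ext (hr'.trans hp.symm)) hC
        rw [hu', hr'', Sym2.eq_swap]
      · obtain ⟨hb, hne⟩ := hdel _ _ hadj
        obtain ⟨hu, hr'⟩ := (bigTree_adj_inr_inl).1 hb
        simp only [Sum.elim_inl, Sum.elim_inr, iff_false]
        intro hC
        apply hne
        have hu' : u' = s := Subtype.ext (hu.trans hs.symm)
        have hr'' : r = p := Prod.ext (Subtype.ext (hr'.trans hp.symm)) hC
        rw [hu', hr'']
      · obtain ⟨hb, _⟩ := hdel _ _ hadj
        simp only [Sum.elim_inr]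
        rw [((bigTree_adj_inr_inr).1 hb).1]

lemma bigTree_isTree : (bigTree D t₁ t₂).IsTree :=
  ⟨bigTree_connected h12, bigTree_isAcyclic h12⟩

end Main3


section Main4
variable {V T : Type} {G : SimpleGraph V} {D : TreeDecomp G T} {t₁ t₂ : T}
variable (h12 : D.tree.Adj t₁ t₂)

lemma XC_subset_X {C : Set V} : XC D t₁ t₂ C ⊆ Xset D t₁ t₂ := fun _ h => h.1

lemma bigA_disj_X {v : V} (hv : v ∈ bigA D t₁ t₂) : v ∉ Xset D t₁ t₂ := hv.2

lemma mem_XC_of {v : V} {C : {C : Set V // C ∈ compSet G (bigA D t₁ t₂)}}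
    (h : v ∈ C.val ∪ XC D t₁ t₂ C.val) (hX : v ∈ Xset D t₁ t₂) : v ∈ XC D t₁ t₂ C.val := by
  rcases h with h | h
  · exact absurd hX (bigA_disj_X (compSet_subset C.2 h))
  · exact h

lemma mem_X_of_two {v : V} {C C' : {C : Set V // C ∈ compSet G (bigA D t₁ t₂)}} (hne : C ≠ C')
    (h : v ∈ C.val ∪ XC D t₁ t₂ C.val) (h' : v ∈ C'.val ∪ XC D t₁ t₂ C'.val) :
    v ∈ Xset D t₁ t₂ := by
  rcases h with h | h
  · rcases h' with h' | h'
    · exact absurd h' (Set.disjoint_left.1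
        (compSet_disjoint C.2 C'.2 (fun hh => hne (Subtype.ext hh))) h)
    · exact absurd h'.1 (bigA_disj_X (compSet_subset C.2 h))
  · exact h.1

include h12

lemma good_walk {v : V} (a c : NT D t₁ t₂) (hva : v ∈ bigPart D t₁ t₂ a)
    (hvc : v ∈ bigPart D t₁ t₂ c) :
    ∃ w : (bigTree D t₁ t₂).Walk a c, ∀ x ∈ w.support, v ∈ bigPart D t₁ t₂ x := by
  classical
  have ht₁S : t₁ ∈ S1 D t₁ t₂ := mem_sideOf_self _ _
  have ht₂S : t₂ ∈ S2 D t₁ t₂ := mem_sideOf_self _ _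
  have hXt₁ : Xset D t₁ t₂ ⊆ D.part t₁ := Set.inter_subset_left
  have hXt₂ : Xset D t₁ t₂ ⊆ D.part t₂ := Set.inter_subset_right
  -- sub1 : walks on the inl side
  have sub1 : ∀ (s s' : {t : T // t ∈ S2 D t₁ t₂}), v ∈ D.part s.val → v ∈ D.part s'.val →
      ∃ w : (bigTree D t₁ t₂).Walk (.inl s) (.inl s'),
        ∀ x ∈ w.support, v ∈ bigPart D t₁ t₂ x := by
    rintro ⟨s, hs⟩ ⟨s', hs'⟩ hv hv'
    obtain ⟨q, hqp, hqS⟩ := side_path hs hs'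
    obtain ⟨w', hw'⟩ := lift_S2 q hs hs' hqS (fun x => v ∈ D.part x)
      (fun x hx => parts_on_path hqp hx hv hv')
    refine ⟨w', fun x hx => ?_⟩
    obtain ⟨u, rfl, hu⟩ := hw' x hx
    exact hu
  -- sub2 : walks inside a copy
  have sub2 : ∀ (t t' : {t : T // t ∈ S1 D t₁ t₂}) (C : {C : Set V // C ∈ compSet G (bigA D t₁ t₂)}),
      v ∈ D.part t.val → v ∈ D.part t'.val → v ∈ C.val ∪ XC D t₁ t₂ C.val →
      ∃ w : (bigTree D t₁ t₂).Walk (.inr (t, C)) (.inr (t', C)),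
        ∀ x ∈ w.support, v ∈ bigPart D t₁ t₂ x := by
    rintro ⟨t, ht⟩ ⟨t', ht'⟩ C hv hv' hvC
    obtain ⟨q, hqp, hqS⟩ := side_path ht ht'
    obtain ⟨w', hw'⟩ := lift_S1 C q ht ht' hqS (fun x => v ∈ D.part x)
      (fun x hx => parts_on_path hqp hx hv hv')
    refine ⟨w', fun x hx => ?_⟩
    obtain ⟨u, rfl, hu, huC⟩ := hw' x hx
    exact ⟨hu, by rw [huC]; exact hvC⟩
  -- sub4 : from inl to inr
  have sub4 : ∀ (s : {t : T // t ∈ S2 D t₁ t₂})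
      (p : {t : T // t ∈ S1 D t₁ t₂} × {C : Set V // C ∈ compSet G (bigA D t₁ t₂)}),
      v ∈ bigPart D t₁ t₂ (.inl s) → v ∈ bigPart D t₁ t₂ (.inr p) →
      ∃ w : (bigTree D t₁ t₂).Walk (.inl s) (.inr p),
        ∀ x ∈ w.support, v ∈ bigPart D t₁ t₂ x := by
    rintro s ⟨t, C⟩ hva hvc
    have hvX : v ∈ Xset D t₁ t₂ := cross_subset h12 s.2 t.2 ⟨hva, hvc.1⟩
    have hvXC : v ∈ XC D t₁ t₂ C.val := mem_XC_of hvc.2 hvX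
    obtain ⟨w₁, hw₁⟩ := sub1 s ⟨t₂, ht₂S⟩ hva (hXt₂ hvX)
    obtain ⟨w₂, hw₂⟩ := sub2 ⟨t₁, ht₁S⟩ t C (hXt₁ hvX) hvc.1 (Or.inr hvXC)
    have hadj : (bigTree D t₁ t₂).Adj (.inl ⟨t₂, ht₂S⟩) (.inr (⟨t₁, ht₁S⟩, C)) := ⟨rfl, rfl⟩
    refine ⟨w₁.append (Walk.cons hadj w₂), fun x hx => ?_⟩
    rw [Walk.mem_support_append_iff] at hx
    rcases hx with hx | hx
    · exact hw₁ x hx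
    · rw [Walk.support_cons, List.mem_cons] at hx
      rcases hx with rfl | hx
      · exact hXt₂ hvX
      · exact hw₂ x hx
  match a, c with
  | .inl s, .inl s' => exact sub1 s s' hva hvc
  | .inl s, .inr p => exact sub4 s p hva hvc
  | .inr p, .inl s =>
    obtain ⟨w, hw⟩ := sub4 s p hvc hva
    exact ⟨w.reverse, fun x hx => hw x (by rwa [Walk.support_reverse, List.mem_reverse] at hx)⟩
  | .inr ⟨t, C⟩, .inr ⟨t', C'⟩ =>
    by_cases hC : C = C'
    · subst hC
      exact sub2 t t' C hva.1 hvc.1 hva.2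
    · have hvX : v ∈ Xset D t₁ t₂ := mem_X_of_two hC hva.2 hvc.2
      have hvXC : v ∈ XC D t₁ t₂ C.val := mem_XC_of hva.2 hvX
      have hvXC' : v ∈ XC D t₁ t₂ C'.val := mem_XC_of hvc.2 hvX
      obtain ⟨w₁, hw₁⟩ := sub2 t ⟨t₁, ht₁S⟩ C hva.1 (hXt₁ hvX) (Or.inr hvXC)
      obtain ⟨w₂, hw₂⟩ := sub2 ⟨t₁, ht₁S⟩ t' C' (hXt₁ hvX) hvc.1 (Or.inr hvXC')
      have hadj₁ : (bigTree D t₁ t₂).Adj (.inr (⟨t₁, ht₁S⟩, C)) (.inl ⟨t₂, ht₂S⟩) := ⟨rfl, rfl⟩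
      have hadj₂ : (bigTree D t₁ t₂).Adj (.inl ⟨t₂, ht₂S⟩) (.inr (⟨t₁, ht₁S⟩, C')) := ⟨rfl, rfl⟩
      refine ⟨(w₁.append (Walk.cons hadj₁ (Walk.cons hadj₂ w₂))), fun x hx => ?_⟩
      rw [Walk.mem_support_append_iff] at hx
      rcases hx with hx | hx
      · exact hw₁ x hx
      · rw [Walk.support_cons, List.mem_cons] at hx
        rcases hx with rfl | hx
        · exact ⟨hXt₁ hvX, Or.inr hvXC⟩
        · rw [Walk.support_cons, List.mem_cons] at hx
          rcases hx with rfl | hx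
          · exact hXt₂ hvX
          · exact hw₂ x hx

/-- The modified tree-decomposition. -/
def bigTD : TreeDecomp G (NT D t₁ t₂) where
  tree := bigTree D t₁ t₂
  isTree := bigTree_isTree h12
  part := bigPart D t₁ t₂
  part_covers := by
    intro v
    obtain ⟨t, ht⟩ := D.part_covers v
    rcases sideOf_cover D.isTree h12 t with hS | hS
    · rcases mem_S1_part_cases h12 ht hS with hX | hA
      · exact ⟨.inl ⟨t₂, mem_sideOf_self _ _⟩, hX.2⟩
      · exact ⟨.inr (⟨t, hS⟩, ⟨comp G (bigA D t₁ t₂) v, mem_compSet_self hA⟩),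
          ht, Or.inl (mem_comp_self hA)⟩
    · exact ⟨.inl ⟨t, hS⟩, ht⟩
  part_edge := by
    intro u v huv
    obtain ⟨t, hut, hvt⟩ := D.part_edge huv
    rcases sideOf_cover D.isTree h12 t with hS | hS
    · rcases mem_S1_part_cases h12 hut hS with huX | huA
      · rcases mem_S1_part_cases h12 hvt hS with hvX | hvA
        · exact ⟨.inl ⟨t₂, mem_sideOf_self _ _⟩, huX.2, hvX.2⟩
        · refine ⟨.inr (⟨t, hS⟩, ⟨comp G (bigA D t₁ t₂) v, mem_compSet_self hvA⟩),
            ⟨hut, Or.inr ⟨huX, v, mem_comp_self hvA, huv⟩⟩, ⟨hvt, Or.inl (mem_comp_self hvA)⟩⟩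
      · rcases mem_S1_part_cases h12 hvt hS with hvX | hvA
        · refine ⟨.inr (⟨t, hS⟩, ⟨comp G (bigA D t₁ t₂) u, mem_compSet_self huA⟩),
            ⟨hut, Or.inl (mem_comp_self huA)⟩, ⟨hvt, Or.inr ⟨hvX, u, mem_comp_self huA, huv.symm⟩⟩⟩
        · refine ⟨.inr (⟨t, hS⟩, ⟨comp G (bigA D t₁ t₂) u, mem_compSet_self huA⟩),
            ⟨hut, Or.inl (mem_comp_self huA)⟩,
            ⟨hvt, Or.inl (mem_comp_of_adj (mem_comp_self huA) hvA huv)⟩⟩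
    · exact ⟨.inl ⟨t, hS⟩, hut, hvt⟩
  part_path := by
    classical
    intro a b c p hb v hv
    obtain ⟨w, hw⟩ := good_walk h12 a c hv.1 hv.2
    have huniq := (bigTree_isAcyclic h12).path_unique p ⟨w.bypass, w.bypass_isPath⟩
    have hval : p.val = w.bypass := congrArg Subtype.val huniq
    apply hw b
    apply w.support_bypass_subset
    rw [← hval]
    exact hb

end Main4


section Main5
variable {V T : Type} [Fintype V] {G : SimpleGraph V} {D : TreeDecomp G T} {t₁ t₂ : T}
variable (h12 : D.tree.Adj t₁ t₂)
include h12

lemma bigTD_adhesion {k : ℕ} (hadh : D.AdhesionLT k) : (bigTD h12).AdhesionLT k := by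
  have hX : (Xset D t₁ t₂).ncard < k := hadh h12
  rintro (s|p) (s'|q) hadj
  · exact lt_of_le_of_lt
      (Set.ncard_le_ncard (Set.inter_subset_inter Set.Subset.rfl Set.Subset.rfl) (Set.toFinite _))
      (hadh hadj)
  · -- inl-inr cross edge
    obtain ⟨hs, hq⟩ := hadj
    refine lt_of_le_of_lt (Set.ncard_le_ncard ?_ (Set.toFinite _)) hX
    intro v hv
    exact ⟨hq ▸ hv.2.1, hs ▸ hv.1⟩
  · obtain ⟨hs, hq⟩ := hadj
    refine lt_of_le_of_lt (Set.ncard_le_ncard ?_ (Set.toFinite _)) hX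
    intro v hv
    exact ⟨hq ▸ hv.1.1, hs ▸ hv.2⟩
  · obtain ⟨hC, hadj'⟩ := hadj
    refine lt_of_le_of_lt (Set.ncard_le_ncard ?_ (Set.toFinite _)) (hadh hadj')
    exact Set.inter_subset_inter Set.inter_subset_left Set.inter_subset_left

end Main5


section Counting

lemma ncard_sum_split {α β : Type} [Finite α] [Finite β] (P : α ⊕ β → Prop) :
    {x : α ⊕ β | P x}.ncard
      = {a : α | P (Sum.inl a)}.ncard + {b : β | P (Sum.inr b)}.ncard := by
  have h1 : {x : α ⊕ β | P x}
      = Sum.inl '' {a | P (Sum.inl a)} ∪ Sum.inr '' {b | P (Sum.inr b)} := by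
    ext x
    cases x with
    | inl a => simp
    | inr b => simp
  rw [h1, Set.ncard_union_eq ?_ (Set.toFinite _) (Set.toFinite _),
    Set.ncard_image_of_injective _ Sum.inl_injective,
    Set.ncard_image_of_injective _ Sum.inr_injective]
  rw [Set.disjoint_left]
  rintro x ⟨a, _, rfl⟩ ⟨b, _, hb⟩
  exact Sum.inl_ne_inr hb.symm

lemma ncard_subtype_val {T : Type} (S : Set T) (Q : T → Prop) :
    {s : {t : T // t ∈ S} | Q s.val}.ncard = {t : T | t ∈ S ∧ Q t}.ncard := by
  have h : {t : T | t ∈ S ∧ Q t} = Subtype.val '' {s : {t : T // t ∈ S} | Q s.val} := by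
    ext t
    constructor
    · rintro ⟨h1, h2⟩; exact ⟨⟨t, h1⟩, h2, rfl⟩
    · rintro ⟨⟨t', ht'⟩, hq, rfl⟩; exact ⟨ht', hq⟩
  rw [h, Set.ncard_image_of_injective _ Subtype.val_injective]

lemma ncard_split_pred {T : Type} [Finite T] {S₁ S₂ : Set T}
    (hcov : ∀ t, t ∈ S₁ ∨ t ∈ S₂) (hdis : ∀ t, t ∈ S₁ → t ∈ S₂ → False) (Q : T → Prop) :
    {t : T | Q t}.ncard = {t : T | t ∈ S₂ ∧ Q t}.ncard + {t : T | t ∈ S₁ ∧ Q t}.ncard := by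
  have h1 : {t : T | Q t} = {t : T | t ∈ S₂ ∧ Q t} ∪ {t : T | t ∈ S₁ ∧ Q t} := by
    ext t
    simp only [Set.mem_setOf_eq, Set.mem_union]
    constructor
    · intro h
      rcases hcov t with h' | h'
      · exact Or.inr ⟨h', h⟩
      · exact Or.inl ⟨h', h⟩
    · rintro (⟨_, h⟩ | ⟨_, h⟩) <;> exact h
  rw [h1, Set.ncard_union_eq ?_ (Set.toFinite _) (Set.toFinite _)]
  rw [Set.disjoint_left]
  rintro t ⟨h2, _⟩ ⟨h1, _⟩
  exact hdis t h1 h2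

lemma ncard_split_flag {T : Type} [Finite T] (R F : T → Prop) :
    {t : T | R t}.ncard = {t : T | R t ∧ F t}.ncard + {t : T | R t ∧ ¬ F t}.ncard := by
  classical
  have h1 : {t : T | R t} = {t : T | R t ∧ F t} ∪ {t : T | R t ∧ ¬ F t} := by
    ext t
    simp only [Set.mem_setOf_eq, Set.mem_union]
    by_cases hF : F t <;> tauto
  rw [h1, Set.ncard_union_eq ?_ (Set.toFinite _) (Set.toFinite _)]
  rw [Set.disjoint_left]
  rintro t ⟨_, h⟩ ⟨_, h'⟩
  exact h' h

end Counting


section Main6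
variable {V T : Type} [Fintype V] [Fintype T] {G : SimpleGraph V}
variable {D : TreeDecomp G T} {t₁ t₂ : T}
variable (h12 : D.tree.Adj t₁ t₂)
include h12

lemma bigTD_fatlex
    (hypN : ∀ C ∈ compSet G (bigA D t₁ t₂), ∃ x ∈ Xset D t₁ t₂, x ∉ XC D t₁ t₂ C) :
    FatLexLT (Fintype.card V) (TreeDecomp.fatness (bigTD h12)) D.fatness := by
  classical
  set n := Fintype.card V with hn
  set sz : T → ℕ := fun t => (D.part t).ncard with hsz
  set Csub := {C : Set V // C ∈ compSet G (bigA D t₁ t₂)} with hCsub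
  set S1sub := {t : T // t ∈ S1 D t₁ t₂} with hS1sub
  set szW : S1sub × Csub → ℕ :=
    fun p => (D.part p.1.val ∩ (p.2.val ∪ XC D t₁ t₂ p.2.val)).ncard with hszW
  set CaseA : T → Prop := fun t => ∃ C : Csub, D.part t ⊆ C.val ∪ XC D t₁ t₂ C.val with hCA
  have hXpart : Xset D t₁ t₂ ⊆ D.part t₁ := Set.inter_subset_left
  -- XC is strictly smaller than X
  have hXCne : ∀ C : Csub, (XC D t₁ t₂ C.val).ncard < (Xset D t₁ t₂).ncard := by
    intro C
    obtain ⟨x, hx, hx'⟩ := hypN C.val C.2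
    refine Set.ncard_lt_ncard ?_ (Set.toFinite _)
    rw [Set.ssubset_def]
    exact ⟨XC_subset_X, fun h => hx' (h hx)⟩
  -- t₁ is not CaseA
  have hCA1 : ¬ CaseA t₁ := by
    rintro ⟨C, hsub⟩
    obtain ⟨x, hx, hx'⟩ := hypN C.val C.2
    rcases hsub (hXpart hx) with h | h
    · exact bigA_disj_X (compSet_subset C.2 h) hx
    · exact hx' h
  set B : Set T := {t : T | t ∈ S1 D t₁ t₂ ∧ ¬ CaseA t} with hB
  have htB₁ : t₁ ∈ B := ⟨mem_sideOf_self _ _, hCA1⟩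
  set Bf : Finset T := (Set.toFinite B).toFinset with hBf
  have hBfne : (Bf.image sz).Nonempty := ⟨sz t₁, Finset.mem_image_of_mem _ ((Set.Finite.mem_toFinset _).2 htB₁)⟩
  set m : ℕ := (Bf.image sz).max' hBfne with hm
  obtain ⟨tB, htBmem, htBsz⟩ := Finset.mem_image.1 ((Bf.image sz).max'_mem hBfne)
  have htBB : tB ∈ B := (Set.Finite.mem_toFinset _).1 htBmem
  have hle : ∀ t ∈ B, sz t ≤ m :=
    fun t ht => Finset.le_max' _ _ (Finset.mem_image_of_mem _ ((Set.Finite.mem_toFinset _).2 ht))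
  have hXm : (Xset D t₁ t₂).ncard ≤ m :=
    le_trans (Set.ncard_le_ncard hXpart (Set.toFinite _)) (hle t₁ htB₁)
  have htBsz' : sz tB = m := htBsz
  have hmn : m ≤ n := by
    rw [← htBsz']
    calc sz tB ≤ (Set.univ : Set V).ncard :=
          Set.ncard_le_ncard (Set.subset_univ _) (Set.toFinite _)
      _ = n := by rw [Set.ncard_univ, Nat.card_eq_fintype_card]
  -- main copies
  have subMain : ∀ (t : T) (ht : t ∈ S1 D t₁ t₂) (C : Csub) (σ : ℕ), m ≤ σ →
      szW (⟨t, ht⟩, C) = σ → D.part t ⊆ C.val ∪ XC D t₁ t₂ C.val ∧ sz t = σ := by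
    intro t ht C σ hσ hW
    by_cases hEq : D.part t ∩ (C.val ∪ XC D t₁ t₂ C.val) = D.part t
    · exact ⟨Set.inter_eq_left.1 hEq, by rw [hsz]; simp only; rw [← hW, hszW]; simp only; rw [hEq]⟩
    · exfalso
      have hlt : szW (⟨t, ht⟩, C) < sz t :=
        Set.ncard_lt_ncard (Set.ssubset_iff_subset_ne.2 ⟨Set.inter_subset_left, hEq⟩)
          (Set.toFinite _)
      by_cases hA : CaseA t
      · obtain ⟨C₀, hC₀⟩ := hA
        by_cases hCC : C₀ = C
        · subst hCC
          exact hEq (Set.inter_eq_left.2 hC₀)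
        · -- junk copy
          have hjunk : D.part t ∩ (C.val ∪ XC D t₁ t₂ C.val) ⊆ XC D t₁ t₂ C.val := by
            rintro v ⟨hv1, hv2⟩
            rcases hv2 with hv2 | hv2
            · exfalso
              rcases hC₀ hv1 with h | h
              · exact Set.disjoint_left.1
                  (compSet_disjoint C₀.2 C.2 (fun hh => hCC (Subtype.ext hh))) h hv2
              · exact bigA_disj_X (compSet_subset C.2 hv2) h.1
            · exact hv2
          have : σ < σ := by
            calc σ = szW (⟨t, ht⟩, C) := hW.symm
              _ ≤ (XC D t₁ t₂ C.val).ncard := Set.ncard_le_ncard hjunk (Set.toFinite _)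
              _ < (Xset D t₁ t₂).ncard := hXCne C
              _ ≤ m := hXm
              _ ≤ σ := hσ
          exact absurd this (lt_irrefl σ)
      · have : σ < σ := by
          calc σ = szW (⟨t, ht⟩, C) := hW.symm
            _ < sz t := hlt
            _ ≤ m := hle t ⟨ht, hA⟩
            _ ≤ σ := hσ
        exact absurd this (lt_irrefl σ)
  -- uniqueness of the main component
  have uniqMain : ∀ (t : T) (C C' : Csub) (σ : ℕ), m ≤ σ → sz t = σ →
      D.part t ⊆ C.val ∪ XC D t₁ t₂ C.val → D.part t ⊆ C'.val ∪ XC D t₁ t₂ C'.val → C = C' := by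
    intro t C C' σ hσ hszt hsub hsub'
    by_contra hne
    have hsubX : D.part t ⊆ Xset D t₁ t₂ :=
      fun v hv => mem_X_of_two hne (hsub hv) (hsub' hv)
    have h1 : sz t ≤ (Xset D t₁ t₂).ncard := Set.ncard_le_ncard hsubX (Set.toFinite _)
    have h2 : (Xset D t₁ t₂).ncard ≤ sz t := by
      rw [hszt]; exact le_trans hXm hσ
    have hPX : D.part t = Xset D t₁ t₂ :=
      Set.eq_of_subset_of_ncard_le hsubX h2 (Set.toFinite _)
    obtain ⟨x, hx, hx'⟩ := hypN C.val C.2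
    rcases hsub (hPX ▸ hx) with h | h
    · exact bigA_disj_X (compSet_subset C.2 h) hx
    · exact hx' h
  -- the key counting bijection
  have key : ∀ σ : ℕ, m ≤ σ →
      {p : S1sub × Csub | szW p = σ}.ncard
        = {t : T | (t ∈ S1 D t₁ t₂ ∧ sz t = σ) ∧ CaseA t}.ncard := by
    intro σ hσ
    have himg : (fun p : S1sub × Csub => p.1.val) '' {p | szW p = σ}
        = {t : T | (t ∈ S1 D t₁ t₂ ∧ sz t = σ) ∧ CaseA t} := by
      ext t
      constructor
      · rintro ⟨⟨⟨t', ht'⟩, C⟩, hp, rfl⟩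
        obtain ⟨hsub, hszt⟩ := subMain t' ht' C σ hσ hp
        exact ⟨⟨ht', hszt⟩, ⟨C, hsub⟩⟩
      · rintro ⟨⟨ht, hszt⟩, ⟨C, hsub⟩⟩
        refine ⟨(⟨t, ht⟩, C), ?_, rfl⟩
        show szW (⟨t, ht⟩, C) = σ
        rw [hszW]
        simp only
        rw [Set.inter_eq_left.2 hsub]
        exact hszt
    have hinj : Set.InjOn (fun p : S1sub × Csub => p.1.val) {p | szW p = σ} := by
      rintro ⟨⟨t, ht⟩, C⟩ hp ⟨⟨t', ht'⟩, C'⟩ hp' heq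
      simp only at heq
      subst heq
      obtain ⟨hsub, hszt⟩ := subMain t ht C σ hσ hp
      obtain ⟨hsub', _⟩ := subMain t ht' C' σ hσ hp'
      have := uniqMain t C C' σ hσ hszt hsub hsub'
      subst this
      rfl
    rw [← himg, Set.ncard_image_of_injOn hinj]
  -- counting on both sides
  have hcov := fun t => sideOf_cover D.isTree h12 t
  have hdis : ∀ t, t ∈ S1 D t₁ t₂ → t ∈ S2 D t₁ t₂ → False :=
    fun t h1 h2 => sideOf_not_both D.isTree h12 h1 h2
  have countD : ∀ σ : ℕ, {t : T | sz t = σ}.ncard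
      = {t : T | t ∈ S2 D t₁ t₂ ∧ sz t = σ}.ncard + {t : T | t ∈ S1 D t₁ t₂ ∧ sz t = σ}.ncard :=
    fun σ => ncard_split_pred hcov hdis _
  have countD' : ∀ σ : ℕ, {x : NT D t₁ t₂ | (bigPart D t₁ t₂ x).ncard = σ}.ncard
      = {t : T | t ∈ S2 D t₁ t₂ ∧ sz t = σ}.ncard + {p : S1sub × Csub | szW p = σ}.ncard := by
    intro σ
    rw [ncard_sum_split (fun x => (bigPart D t₁ t₂ x).ncard = σ)]
    congr 1
    exact ncard_subtype_val (S2 D t₁ t₂) (fun t => sz t = σ)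
  have countS1 : ∀ σ : ℕ, {t : T | t ∈ S1 D t₁ t₂ ∧ sz t = σ}.ncard
      = {t : T | (t ∈ S1 D t₁ t₂ ∧ sz t = σ) ∧ CaseA t}.ncard
        + {t : T | (t ∈ S1 D t₁ t₂ ∧ sz t = σ) ∧ ¬ CaseA t}.ncard :=
    fun σ => ncard_split_flag _ _
  -- fatness formulae
  have hfat' : ∀ j : ℕ, TreeDecomp.fatness (bigTD h12) j
      = {x : NT D t₁ t₂ | (bigPart D t₁ t₂ x).ncard = n - j}.ncard := fun j => rfl
  have hfat : ∀ j : ℕ, D.fatness j = {t : T | sz t = n - j}.ncard := fun j => rfl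
  refine ⟨n - m, Nat.sub_le _ _, ?_, ?_⟩
  · intro j hj
    have hσ : m < n - j := by omega
    rw [hfat', hfat, countD' (n - j), countD (n - j), countS1 (n - j), key (n - j) hσ.le]
    have hempty : {t : T | (t ∈ S1 D t₁ t₂ ∧ sz t = n - j) ∧ ¬ CaseA t} = ∅ := by
      ext t
      simp only [Set.mem_setOf_eq, Set.mem_empty_iff_false, iff_false]
      rintro ⟨⟨ht, hszt⟩, hA⟩
      have := hle t ⟨ht, hA⟩
      omega
    rw [hempty, Set.ncard_empty]
    omega
  · have hσ : n - (n - m) = m := by omega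
    rw [hfat', hfat, hσ, countD' m, countD m, countS1 m, key m le_rfl]
    have hpos : 0 < {t : T | (t ∈ S1 D t₁ t₂ ∧ sz t = m) ∧ ¬ CaseA t}.ncard := by
      rw [Set.ncard_pos (Set.toFinite _)]
      exact ⟨tB, ⟨htBB.1, htBsz⟩, htBB.2⟩
    omega

end Main6

end St7

/-- Let `(T, V)` be a `k`-atomic tree-decomposition of `G` and `t₁t₂` an
edge of its tree. With `T₁` the component of `T - t₁t₂` containing `t₁`,
`G₁ = ⋃_{t ∈ T₁} V_t` and `X = V_{t₁} ∩ V_{t₂}`, there is a connected component `C` of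
the subgraph of `G` induced on `G₁ \ X` such that every `x ∈ X` has a neighbor in `C`. -/
theorem stmt_7 {V T : Type} [Fintype V] [Fintype T] (G : SimpleGraph V) (k : ℕ)
    (D : TreeDecomp G T) (hD : D.IsAtomic k) (t₁ t₂ : T) (h12 : D.tree.Adj t₁ t₂) :
    ∃ C : Set V,
      IsCompOf G
        ((⋃ t ∈ {t : T | ∃ p : D.tree.Walk t₁ t, s(t₁, t₂) ∉ p.edges}, D.part t) \
          (D.part t₁ ∩ D.part t₂)) C ∧
      ∀ x ∈ D.part t₁ ∩ D.part t₂, ∃ y ∈ C, G.Adj x y := by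
  classical
  by_contra hcon
  have hypN : ∀ C ∈ St7.compSet G (St7.bigA D t₁ t₂), ∃ x ∈ St7.Xset D t₁ t₂,
      x ∉ St7.XC D t₁ t₂ C := by
    intro C hC
    by_contra h
    push_neg at h
    apply hcon
    obtain ⟨v, hv, rfl⟩ := hC
    refine ⟨St7.comp G (St7.bigA D t₁ t₂) v, St7.comp_isCompOf hv, ?_⟩
    intro x hx
    obtain ⟨_, y, hy, hadj⟩ := h x hx
    exact ⟨y, hy, hadj⟩
  exact hD.2 (St7.NT D t₁ t₂) (Fintype.ofFinite _) (St7.bigTD h12)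
    (St7.bigTD_adhesion h12 hD.1) (St7.bigTD_fatlex h12 hypN)
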